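/- Let G be a topological group, let K be a closed subgroup of G, and let O be a nonempty open symmetric subset of G with O = KOK and O ⊆ UK for some open subgroup U of G. Then the subgroup generated by O equals VK for some open subgroup V of U. -/

import Mathlib

open Topology Pointwise

/-- Let `G` be a topological group, `K` a closed subgroup and `O` a nonempty open symmetric
subset of `G` with `O = K O K` and `O ⊆ U K` for an open subgroup `U` of `G`.  Then the
subgroup generated by `O` equals `V K` for some open subgroup `V` of `U`. -/
theorem subgroup_closure_eq_open_mul_coset {G : Type*} [Group G] [TopologicalSpace G]
    [IsTopologicalGroup G] (K : Subgroup G) (hK : IsClosed (K : Set G))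
    (O : Set G) (hO : IsOpen O) (hne : O.Nonempty) (hsymm : O⁻¹ = O)
    (hKOK : (K : Set G) * O * (K : Set G) = O)
    (U : Subgroup G) (hU : IsOpen (U : Set G)) (hOU : O ⊆ (U : Set G) * (K : Set G)) :
    ∃ V : Subgroup G, V ≤ U ∧ IsOpen (V : Set G) ∧
      (V : Set G) * (K : Set G) = (Subgroup.closure O : Set G) := by
  classical
  obtain ⟨o, ho⟩ := hne
  set H := Subgroup.closure O with hHdef
  have hOsubH : O ⊆ (H : Set G) := Subgroup.subset_closure
  have hKO : ∀ k ∈ K, ∀ x ∈ O, k * x ∈ O := by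
    intro k hk x hx
    rw [← hKOK]
    exact ⟨k * x, ⟨k, hk, x, hx, rfl⟩, 1, K.one_mem, mul_one _⟩
  have hKH : (K : Set G) ⊆ (H : Set G) := by
    intro k hk
    have h1 : k * o ∈ O := hKO k hk o ho
    have hk2 : k = (k * o) * o⁻¹ := by group
    rw [hk2]
    exact H.mul_mem (hOsubH h1) (H.inv_mem (hOsubH ho))
  have hHopen : IsOpen (H : Set G) := by
    rw [isOpen_iff_forall_mem_open]
    intro x hx
    refine ⟨(x * o⁻¹) • O, ?_, hO.smul _, ?_⟩
    · rintro y ⟨z, hz, rfl⟩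
      exact H.mul_mem (H.mul_mem hx (H.inv_mem (hOsubH ho))) (hOsubH hz)
    · exact ⟨o, ho, by simp [smul_eq_mul]⟩
  have hOinv : ∀ x ∈ O, x⁻¹ ∈ O := by
    intro x hx; rw [← hsymm]; simpa using hx
  have hUKmulO : ∀ x ∈ (U : Set G) * (K : Set G), ∀ y ∈ O,
      x * y ∈ (U : Set G) * (K : Set G) := by
    rintro x ⟨u, hu, k, hk, rfl⟩ y hy
    have h1 : k * y ∈ O := hKO k hk y hy
    obtain ⟨u', hu', k', hk', he⟩ := hOU h1
    refine ⟨u * u', U.mul_mem hu hu', k', hk', ?_⟩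
    show u * u' * k' = u * k * y
    simp only at he
    rw [mul_assoc, he]; group
  have hHUK : (H : Set G) ⊆ (U : Set G) * (K : Set G) := by
    intro x hx
    induction hx using Subgroup.closure_induction_right with
    | one => exact ⟨1, U.one_mem, 1, K.one_mem, mul_one 1⟩
    | mul_right x hx y hy ih => exact hUKmulO x ih y hy
    | mul_inv_cancel x hx y hy ih => exact hUKmulO x ih y⁻¹ (hOinv y hy)
  refine ⟨U ⊓ H, inf_le_left, hU.inter hHopen, ?_⟩
  apply Set.Subset.antisymm
  · rintro x ⟨v, hv, k, hk, rfl⟩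
    exact H.mul_mem hv.2 (hKH hk)
  · intro h hh
    obtain ⟨u, hu, k, hk, he⟩ := hHUK hh
    have huH : u ∈ H := by
      have : u = h * k⁻¹ := by rw [← he]; group
      rw [this]
      exact H.mul_mem hh (H.inv_mem (hKH hk))
    exact ⟨u, ⟨hu, huH⟩, k, hk, he⟩
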